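/- For black and white bin packing games with uniform sizes and κ even, the price of anarchy is at most 2: every Nash equilibrium uses at most twice the optimal number of open bins. -/

import Mathlib

open Finset

/-- In a uniform-size game, a bin (list of item indices, bottom to top) is
feasible if no two adjacent items share a color and it holds at most `κ` items. -/
def UBinOK {n : ℕ} {C : Type*} (color : Fin n → C) (κ : ℕ) (b : List (Fin n)) : Prop :=
  (b.map color).Chain' (· ≠ ·) ∧ b.length ≤ κ

/-- A strategy profile is a packing if every item occurs in exactly one bin, once. -/
def IsPacking {n : ℕ} (σ : Fin n → List (Fin n)) : Prop :=
  ∀ i : Fin n, (∑ j : Fin n, ((σ j).count i)) = 1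

/-- The number of open (nonempty) bins of a profile. -/
def openBins {n : ℕ} (σ : Fin n → List (Fin n)) : ℕ :=
  (Finset.univ.filter fun j => σ j ≠ []).card

/-- Nash equilibrium of a uniform-size colorful bin packing game (the
egalitarian and proportional cost functions coincide): the profile is a feasible
packing and no item in a bin with `k` items can move to the top of another bin
feasibly holding it with at least `k` items. -/
def UNE {n : ℕ} {C : Type*} (color : Fin n → C) (κ : ℕ)
    (σ : Fin n → List (Fin n)) : Prop :=
  IsPacking σ ∧ (∀ j, UBinOK color κ (σ j)) ∧
    ∀ (i : Fin n) (j j' : Fin n), j ≠ j' → i ∈ σ j →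
      UBinOK color κ (σ j' ++ [i]) → (σ j').length < (σ j).length

/- ### Auxiliary lemmas -/

lemma sum_count_eq_length {n : ℕ} (l : List (Fin n)) :
    (∑ i : Fin n, l.count i) = l.length := by
  induction l with
  | nil => simp
  | cons a t ih =>
    simp only [List.count_cons, List.length_cons]
    rw [Finset.sum_add_distrib, ih]
    simp [Finset.sum_ite_eq]

lemma sum_count_mul {n : ℕ} (w : Fin n → ℤ) (l : List (Fin n)) :
    (∑ i : Fin n, (l.count i : ℤ) * w i) = (l.map w).sum := by
  induction l with
  | nil => simp
  | cons a t ih =>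
    simp only [List.count_cons, List.map_cons, List.sum_cons]
    push_cast
    rw [show (∑ i : Fin n, ((t.count i : ℤ) + if (a == i) = true then 1 else 0) * w i)
        = (∑ i : Fin n, (t.count i : ℤ) * w i)
          + ∑ i : Fin n, (if (a == i) = true then 1 else 0) * w i by
      rw [← Finset.sum_add_distrib]; congr 1; ext i; ring]
    rw [ih]
    simp [Finset.sum_ite_eq, add_comm]

/-- imbalance of a bool list toward `true` -/
def imb (m : List Bool) : ℤ := (m.count true : ℤ) - (m.count false : ℤ)

lemma altKey : ∀ (m : List Bool), m.Chain' (· ≠ ·) →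
    imb m = if Even m.length then 0 else if m.head? = some true then 1 else -1 := by
  intro m
  induction m with
  | nil => simp [imb]
  | cons a t ih =>
    intro hc
    rcases t with _ | ⟨b, l⟩
    · cases a <;> simp [imb]
    · unfold List.Chain' at hc
      rw [List.isChain_cons_cons] at hc
      obtain ⟨hab, hct⟩ := hc
      have hb : b = !a := by cases a <;> cases b <;> simp_all
      have iht := ih hct
      have hcount : imb (a :: b :: l) = imb (b :: l) + (if a then 1 else -1) := by
        cases a <;> simp [imb, List.count_cons] <;> push_cast <;> ring
      rw [hcount, iht]
      by_cases hp : Even (b :: l).length <;> cases a <;>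
        simp_all [List.head?_cons, Nat.even_add_one, List.length_cons]

lemma altHL : ∀ (m : List Bool), m.Chain' (· ≠ ·) → ∀ a, m.head? = some a →
    m.getLast? = some (if Even m.length then !a else a) := by
  intro m
  induction m with
  | nil => simp
  | cons x t ih =>
    intro hc a ha
    obtain rfl : a = x := by simpa using ha.symm
    rcases t with _ | ⟨b, l⟩
    · simp
    · unfold List.Chain' at hc
      rw [List.isChain_cons_cons] at hc
      obtain ⟨hab, hct⟩ := hc
      have hb : b = !a := by cases a <;> cases b <;> simp_all
      have := ih hct b rfl
      rw [List.getLast?_cons_cons, this]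
      by_cases hp : Even (b :: l).length <;> cases a <;>
        simp_all [Nat.even_add_one, List.length_cons]

/-- imbalance of a bool list toward `c` -/
def imbc (c : Bool) (m : List Bool) : ℤ := (m.count c : ℤ) - (m.count (!c) : ℤ)

lemma imbc_eq (c : Bool) (m : List Bool) : imbc c m = if c then imb m else -imb m := by
  cases c <;> simp [imbc, imb] <;> ring

lemma imbc_le_one (c : Bool) (m : List Bool) (hc : m.Chain' (· ≠ ·)) : imbc c m ≤ 1 := by
  have := altKey m hc
  rw [imbc_eq, this]
  split_ifs <;> norm_num

lemma imbc_even (c : Bool) (m : List Bool) (hc : m.Chain' (· ≠ ·)) (he : Even m.length) :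
    imbc c m = 0 := by
  have := altKey m hc
  rw [imbc_eq, this, if_pos he]
  split_ifs <;> norm_num

lemma imbc_single (c : Bool) : imbc c [c] = 1 := by
  cases c <;> simp [imbc]

lemma imbc_last (c : Bool) (m : List Bool) (hc : m.Chain' (· ≠ ·))
    (hl : m.getLast? = some c) : 0 ≤ imbc c m := by
  rcases m with _ | ⟨a, t⟩
  · simp at hl
  · have hh := altHL (a :: t) hc a rfl
    rw [hh] at hl
    have hk := altKey (a :: t) hc
    rw [imbc_eq, hk]
    simp only [List.length_cons] at *
    by_cases hp : Even (t.length + 1)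
    · simp only [if_pos hp]
      split_ifs <;> norm_num
    · simp only [if_neg hp] at hl ⊢
      have hac : a = c := by simpa using hl
      subst hac
      cases a <;> simp [List.head?_cons]

lemma imbc_sum (c : Bool) (m : List Bool) :
    (m.map (fun b => if b = c then (1:ℤ) else -1)).sum = imbc c m := by
  induction m with
  | nil => simp [imbc]
  | cons b t ih =>
    simp only [List.map_cons, List.sum_cons, imbc, List.count_cons] at *
    cases b <;> cases c <;> simp_all <;> push_cast <;> omega

lemma imbc_map {n : ℕ} (c : Bool) (color : Fin n → Bool) (l : List (Fin n)) :
    (l.map (fun i => if color i = c then (1:ℤ) else -1)).sum = imbc c (l.map color) := by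
  rw [← imbc_sum c (l.map color), List.map_map]
  rfl

lemma topColor {n : ℕ} (color : Fin n → Bool) (l : List (Fin n)) (h : l ≠ []) :
    (l.map color).getLast? = some (color (l.getLast h)) := by
  rw [List.getLast?_map, List.getLast?_eq_getLast h]
  rfl

lemma appendOK {n : ℕ} (color : Fin n → Bool) {κ : ℕ} {l : List (Fin n)} {i : Fin n}
    (h : UBinOK color κ l) (hlen : l.length < κ)
    (htop : ∀ c ∈ (l.map color).getLast?, c ≠ color i) :
    UBinOK color κ (l ++ [i]) := by
  refine ⟨?_, ?_⟩
  · unfold List.Chain'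
    rw [List.map_append, List.isChain_append]
    refine ⟨h.1, List.isChain_singleton _, fun x hx y hy => ?_⟩
    simp only [List.map_cons, List.map_nil, List.head?_cons, Option.mem_def,
      Option.some.injEq] at hy
    subst hy
    exact htop x hx
  · rw [List.length_append, List.length_cons, List.length_nil]
    omega

/-- For black and white bin packing games with uniform sizes and `κ` even, the
price of anarchy is at most `2`: every Nash equilibrium opens at most twice the
optimal number of bins. -/
theorem PoA_uniform_even_le_two (n κ : ℕ) (hκeven : Even κ) (hκ : 2 ≤ κ)
    (color : Fin n → Bool) (σ σstar : Fin n → List (Fin n))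
    (hNE : UNE color κ σ)
    (hstar : IsPacking σstar ∧ ∀ j, UBinOK color κ (σstar j))
    (hopt : ∀ τ, IsPacking τ → (∀ j, UBinOK color κ (τ j)) →
      openBins σstar ≤ openBins τ) :
    openBins σ ≤ 2 * openBins σstar := by
  obtain ⟨hpack, hfeas, hmove⟩ := hNE
  obtain ⟨hpack', hfeas'⟩ := hstar
  have lenle : ∀ j, (σ j).length ≤ κ := fun j => (hfeas j).2
  have lenle' : ∀ j, (σstar j).length ≤ κ := fun j => (hfeas' j).2
  -- the move helper
  have move : ∀ (i j j' : Fin n), j ≠ j' → i ∈ σ j → (σ j').length < κ →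
      (∀ c ∈ ((σ j').map color).getLast?, c ≠ color i) →
      (σ j').length < (σ j).length := by
    intro i j j' hjj hi hlen htop
    exact hmove i j j' hjj hi (appendOK color (hfeas j') hlen htop)
  -- tops of nonempty non-full bins agree
  have tops : ∀ (j j' : Fin n) (h1 : σ j ≠ []) (h2 : σ j' ≠ []),
      (σ j).length < κ → (σ j').length < κ → j ≠ j' →
      color ((σ j).getLast h1) = color ((σ j').getLast h2) := by
    intro j j' h1 h2 hl1 hl2 hjj
    by_contra hne
    have m1 : (σ j').length < (σ j).length := by
      refine move ((σ j).getLast h1) j j' hjj (List.getLast_mem h1) hl2 ?_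
      intro x hx
      rw [topColor color _ h2] at hx
      simp only [Option.mem_def, Option.some.injEq] at hx
      subst hx
      exact fun hcontra => hne hcontra.symm
    have m2 : (σ j).length < (σ j').length := by
      refine move ((σ j').getLast h2) j' j hjj.symm (List.getLast_mem h2) hl1 ?_
      intro x hx
      rw [topColor color _ h1] at hx
      simp only [Option.mem_def, Option.some.injEq] at hx
      subst hx
      exact fun hcontra => hne hcontra
    omega
  -- at most one "mid" bin (2 ≤ length < κ)
  have midUnique : ∀ j ∈ univ.filter (fun j => 2 ≤ (σ j).length ∧ (σ j).length < κ),
      ∀ j' ∈ univ.filter (fun j => 2 ≤ (σ j).length ∧ (σ j).length < κ), j = j' := by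
    intro j hj j' hj'
    simp only [mem_filter, mem_univ, true_and] at hj hj'
    by_contra hjj
    obtain ⟨hj2, hjκ⟩ := hj
    obtain ⟨hj2', hjκ'⟩ := hj'
    have h1 : σ j ≠ [] := by intro h; rw [h] at hj2; simp at hj2
    have h2 : σ j' ≠ [] := by intro h; rw [h] at hj2'; simp at hj2'
    have htopeq := tops j j' h1 h2 hjκ hjκ' hjj
    -- second item of a mid bin has color ≠ top color
    have second : ∀ (k : Fin n) (hk : σ k ≠ []), 2 ≤ (σ k).length →
        ∃ i ∈ σ k, color i ≠ color ((σ k).getLast hk) := by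
      intro k hk hk2
      have hlen : (σ k).length - 2 + 1 < (σ k).length := by omega
      have hchain := (hfeas k).1
      unfold List.Chain' at hchain
      rw [List.isChain_iff_getElem] at hchain
      have hd := hchain ((σ k).length - 2) (by simp; omega)
      refine ⟨(σ k).get ⟨(σ k).length - 2, by omega⟩, List.get_mem _ _, ?_⟩
      have hg1 : ((σ k).map color).get ⟨(σ k).length - 2, by simp; omega⟩
          = color ((σ k).get ⟨(σ k).length - 2, by omega⟩) := by
        simp [List.getElem_map]
      have hg2 : ((σ k).map color).get ⟨(σ k).length - 2 + 1, by simp; omega⟩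
          = color ((σ k).getLast hk) := by
        rw [List.getLast_eq_getElem]
        have : (σ k).length - 2 + 1 = (σ k).length - 1 := by omega
        simp [List.getElem_map, this]
      intro hcontra
      apply hd
      convert (hg1.trans (hcontra.trans hg2.symm)) using 2 <;> simp <;> omega
    obtain ⟨i, hi, hci⟩ := second j h1 hj2
    obtain ⟨i', hi', hci'⟩ := second j' h2 hj2'
    have m1 : (σ j').length < (σ j).length := by
      refine move i j j' hjj hi hjκ' ?_
      intro x hx
      rw [topColor color _ h2] at hx
      simp only [Option.mem_def, Option.some.injEq] at hx
      subst hx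
      rw [← htopeq]
      exact fun hcontra => hci hcontra.symm
    have m2 : (σ j).length < (σ j').length := by
      refine move i' j' j (Ne.symm hjj) hi' hjκ ?_
      intro x hx
      rw [topColor color _ h1] at hx
      simp only [Option.mem_def, Option.some.injEq] at hx
      subst hx
      rw [htopeq]
      exact fun hcontra => hci' hcontra.symm
    omega
  -- abbreviations
  set f := (univ.filter fun j : Fin n => (σ j).length = κ).card with hf
  set e := (univ.filter fun j : Fin n => 2 ≤ (σ j).length ∧ (σ j).length < κ).card with he
  set t := (univ.filter fun j : Fin n => (σ j).length = 1).card with ht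
  set Fs := openBins σstar with hFs
  -- (A) openBins σ = f + e + t
  have hA : openBins σ = f + e + t := by
    have step : ∀ j : Fin n, (if σ j ≠ [] then 1 else 0)
        = (if (σ j).length = κ then 1 else 0)
          + ((if 2 ≤ (σ j).length ∧ (σ j).length < κ then 1 else 0)
            + (if (σ j).length = 1 then 1 else 0)) := by
      intro j
      have hle := lenle j
      by_cases hnil : σ j = []
      · simp only [hnil, ne_eq, not_true_eq_false, if_false, List.length_nil]
        have h0 : ¬ (0 = κ) := by omega
        have h2 : ¬ (2 ≤ 0 ∧ 0 < κ) := by omega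
        simp [h0, h2]
      · have hpos : 0 < (σ j).length := List.length_pos_iff.mpr hnil
        rw [if_pos hnil]
        split_ifs <;> omega
    calc openBins σ = ∑ j : Fin n, if σ j ≠ [] then 1 else 0 := Finset.card_filter _ _
      _ = ∑ j : Fin n, ((if (σ j).length = κ then 1 else 0)
          + ((if 2 ≤ (σ j).length ∧ (σ j).length < κ then 1 else 0)
            + (if (σ j).length = 1 then 1 else 0))) := Finset.sum_congr rfl fun j _ => step j
      _ = f + (e + t) := by
          rw [Finset.sum_add_distrib, Finset.sum_add_distrib,
            ← Finset.card_filter, ← Finset.card_filter, ← Finset.card_filter]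
      _ = f + e + t := by omega
  -- (B) e ≤ 1
  have hB : e ≤ 1 := Finset.card_le_one.mpr midUnique
  -- total number of items
  have key : ∀ (τ : Fin n → List (Fin n)), IsPacking τ → ∑ j : Fin n, (τ j).length = n := by
    intro τ hτ
    calc ∑ j : Fin n, (τ j).length = ∑ j : Fin n, ∑ i : Fin n, (τ j).count i := by
          simp [sum_count_eq_length]
      _ = ∑ i : Fin n, ∑ j : Fin n, (τ j).count i := Finset.sum_comm
      _ = ∑ i : Fin n, 1 := Finset.sum_congr rfl fun i _ => hτ i
      _ = n := by simp
  -- (C) κ * f + 2 * e ≤ κ * Fs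
  have hC : κ * f + 2 * e ≤ κ * Fs := by
    have hlow : κ * f + 2 * e ≤ ∑ j : Fin n, (σ j).length := by
      have h1 : κ * f = ∑ j : Fin n, if (σ j).length = κ then κ else 0 := by
        rw [← Finset.sum_filter]; simp [mul_comm, hf, he]
      have h2 : 2 * e = ∑ j : Fin n,
          if 2 ≤ (σ j).length ∧ (σ j).length < κ then 2 else 0 := by
        rw [← Finset.sum_filter]; simp [mul_comm, hf, he]
      rw [h1, h2, ← Finset.sum_add_distrib]
      refine Finset.sum_le_sum fun j _ => ?_
      have := lenle j
      split_ifs <;> omega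
    have hup : ∑ j : Fin n, (σstar j).length ≤ κ * Fs := by
      have h1 : κ * Fs = ∑ j : Fin n, if σstar j ≠ [] then κ else 0 := by
        rw [hFs, openBins, ← Finset.sum_filter]; simp [mul_comm]
      rw [h1]
      refine Finset.sum_le_sum fun j _ => ?_
      by_cases hj : σstar j = []
      · simp [hj]
      · simp [hj, lenle' j]
    rw [key σ hpack, ← key σstar hpack'] at hlow
    omega
  -- (D) t ≤ Fs
  have hD : t ≤ Fs := by
    rcases Nat.eq_zero_or_pos t with h0 | hpos
    · omega
    · obtain ⟨j0, hj0⟩ := Finset.card_pos.mp hpos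
      simp only [mem_filter, mem_univ, true_and] at hj0
      have h0ne : σ j0 ≠ [] := by intro h; rw [h] at hj0; simp at hj0
      set c := color ((σ j0).getLast h0ne) with hc
      have topc : ∀ (j : Fin n) (h : σ j ≠ []), (σ j).length < κ →
          color ((σ j).getLast h) = c := by
        intro j h hl
        by_cases hjj : j = j0
        · subst hjj; rfl
        · exact tops j j0 h h0ne hl (by omega) hjj
      -- the imbalance sum is a packing invariant
      have sumImb : ∀ (τ : Fin n → List (Fin n)), IsPacking τ →
          ∑ j : Fin n, imbc c ((τ j).map color)
            = ∑ i : Fin n, (if color i = c then (1:ℤ) else -1) := by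
        intro τ hτ
        calc ∑ j : Fin n, imbc c ((τ j).map color)
            = ∑ j : Fin n, ((τ j).map (fun i => if color i = c then (1:ℤ) else -1)).sum := by
              refine Finset.sum_congr rfl fun j _ => (imbc_map c color (τ j)).symm
          _ = ∑ j : Fin n, ∑ i : Fin n,
              ((τ j).count i : ℤ) * (if color i = c then (1:ℤ) else -1) := by
              refine Finset.sum_congr rfl fun j _ => (sum_count_mul _ (τ j)).symm
          _ = ∑ i : Fin n, ∑ j : Fin n,
              ((τ j).count i : ℤ) * (if color i = c then (1:ℤ) else -1) := Finset.sum_comm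
          _ = ∑ i : Fin n, (if color i = c then (1:ℤ) else -1) := by
              refine Finset.sum_congr rfl fun i _ => ?_
              rw [← Finset.sum_mul]
              have : ∑ j : Fin n, ((τ j).count i : ℤ) = 1 := by
                rw [← Nat.cast_sum, hτ i, Nat.cast_one]
              rw [this, one_mul]
      have lb : (t : ℤ) ≤ ∑ j : Fin n, imbc c ((σ j).map color) := by
        have h1 : (t : ℤ) = ∑ j : Fin n, if (σ j).length = 1 then (1:ℤ) else 0 := by
          rw [ht, ← Finset.sum_filter]; simp
        rw [h1]
        refine Finset.sum_le_sum fun j _ => ?_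
        by_cases h1j : (σ j).length = 1
        · rw [if_pos h1j]
          obtain ⟨i, hi⟩ := List.length_eq_one_iff.mp h1j
          have hcol : color i = c := by
            have := topc j (by rw [hi]; simp) (by omega)
            rw [← this]
            congr 1
            simp [hi]
          rw [hi, List.map_cons, List.map_nil, hcol]
          exact le_of_eq (imbc_single c).symm
        · rw [if_neg h1j]
          by_cases hnil : σ j = []
          · simp [hnil, imbc]
          · by_cases hfull : (σ j).length = κ
            · refine le_of_eq (imbc_even c _ (hfeas j).1 ?_).symm
              rw [List.length_map, hfull]
              exact hκeven
            · refine imbc_last c _ (hfeas j).1 ?_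
              rw [topColor color _ hnil, topc j hnil (by have := lenle j; omega)]
      have ub : ∑ j : Fin n, imbc c ((σstar j).map color) ≤ (Fs : ℤ) := by
        have h1 : (Fs : ℤ) = ∑ j : Fin n, if σstar j ≠ [] then (1:ℤ) else 0 := by
          rw [hFs, openBins, ← Finset.sum_filter]; simp
        rw [h1]
        refine Finset.sum_le_sum fun j _ => ?_
        by_cases hj : σstar j = []
        · simp [hj, imbc]
        · rw [if_pos hj]
          exact imbc_le_one c _ (hfeas' j).1
      have := (lb.trans ((sumImb σ hpack).le.trans
        ((sumImb σstar hpack').ge.trans ub)))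
      exact_mod_cast this
  -- combine: f + e ≤ Fs
  have hFE : f + e ≤ Fs := by
    rcases Nat.le_one_iff_eq_zero_or_eq_one.mp hB with h0 | h1
    · rw [h0, add_zero]
      rw [h0, mul_zero, add_zero] at hC
      exact Nat.le_of_mul_le_mul_left hC (by omega)
    · rw [h1] at hC ⊢
      by_contra hcon
      push_neg at hcon
      have hFsf : Fs ≤ f := by omega
      have h2 : κ * Fs ≤ κ * f := Nat.mul_le_mul_left κ hFsf
      omega
  omega
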